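/- With n(r) as above, for every k ≥ 2 and every r with (3/2)·2^{k-1} ≤ r < 2^k, one has n(r)/r ≤ 4/3. In particular, liminf_{r→∞} n(r)/r ≤ 4/3 < 2. -/

import Mathlib

open Filter Complex

/-- The counting function `n(r)` for the points `a_{kj} = 2^k · e^{2πij/2^k}`. -/
noncomputable def nA (r : ℝ) : ℕ :=
  Set.ncard {p : ℕ × ℕ | 1 ≤ p.1 ∧ 1 ≤ p.2 ∧ p.2 ≤ 2 ^ p.1 ∧
    ‖(2 : ℂ) ^ p.1 *
      Complex.exp (2 * Real.pi * Complex.I * p.2 / 2 ^ p.1)‖ ≤ r}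

lemma abs_term (m j : ℕ) :
    ‖(2:ℂ)^m * Complex.exp (2*Real.pi*Complex.I*j/2^m)‖ = 2^m := by
  rw [norm_mul, show (2*Real.pi*Complex.I*(j:ℂ)/2^m) = ((2*Real.pi*j/2^m : ℝ):ℂ)*Complex.I by
      push_cast; ring, Complex.norm_exp_ofReal_mul_I]
  simp [abs_of_nonneg]

lemma myGeom_le (n : ℕ) : ∑ m ∈ Finset.Icc 1 n, 2^m ≤ 2^(n+1) := by
  induction n with
  | zero => simp
  | succ n ih =>
    rw [Finset.sum_Icc_succ_top (by omega)]
    calc ∑ m ∈ Finset.Icc 1 n, 2^m + 2^(n+1) ≤ 2^(n+1) + 2^(n+1) := by omega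
    _ = 2^(n+2) := by ring

lemma nA_le (k : ℕ) (hk : 1 ≤ k) (r : ℝ) (hr : r < 2^k) : nA r ≤ 2^k := by
  set F := (Finset.Icc 1 (k-1)).biUnion (fun m => (Finset.Icc 1 (2^m)).image (fun j => (m,j)))
    with hF
  have hsub : {p : ℕ × ℕ | 1 ≤ p.1 ∧ 1 ≤ p.2 ∧ p.2 ≤ 2 ^ p.1 ∧
      ‖(2 : ℂ) ^ p.1 *
        Complex.exp (2 * Real.pi * Complex.I * p.2 / 2 ^ p.1)‖ ≤ r} ⊆ ↑F := by
    rintro ⟨m, j⟩ ⟨h1, h2, h3, h4⟩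
    rw [abs_term] at h4
    have hmk : m < k := by
      by_contra h
      push_neg at h
      have : (2:ℝ)^k ≤ (2:ℝ)^m := pow_le_pow_right₀ (by norm_num) h
      linarith
    simp only [hF, Finset.coe_biUnion, Set.mem_iUnion, Finset.mem_coe, Finset.mem_Icc,
      Finset.mem_image]
    exact ⟨m, ⟨by omega, by omega⟩, j, by simpa using ⟨h2, h3⟩⟩
  have h1 : nA r ≤ F.card := by
    rw [nA, ← Set.ncard_coe_finset F]
    exact Set.ncard_le_ncard hsub F.finite_toSet
  have h2 : F.card ≤ ∑ m ∈ Finset.Icc 1 (k-1), 2^m := by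
    refine le_trans (Finset.card_biUnion_le) ?_
    exact Finset.sum_le_sum fun m _ => le_trans (Finset.card_image_le) (by simp)
  have h3 := myGeom_le (k-1)
  have hkk : k - 1 + 1 = k := by omega
  rw [hkk] at h3
  omega

theorem counting_ratio_le :
    (∀ k : ℕ, 2 ≤ k → ∀ r : ℝ, (3 / 2) * 2 ^ (k - 1) ≤ r → r < 2 ^ k →
      (nA r : ℝ) / r ≤ 4 / 3) ∧
    Filter.liminf (fun r : ℝ => (nA r : ℝ) / r) Filter.atTop ≤ 4 / 3 := by
  have main : ∀ k : ℕ, 2 ≤ k → ∀ r : ℝ, (3 / 2) * 2 ^ (k - 1) ≤ r → r < 2 ^ k →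
      (nA r : ℝ) / r ≤ 4 / 3 := by
    intro k hk r hr1 hr2
    have hp : (0:ℝ) < 2 ^ (k-1) := by positivity
    have hrpos : 0 < r := by linarith
    rw [div_le_div_iff₀ hrpos (by norm_num)]
    have h1 : (nA r : ℝ) ≤ 2^k := by
      have := nA_le k (by omega) r hr2
      calc (nA r : ℝ) ≤ ((2^k : ℕ) : ℝ) := by exact_mod_cast this
      _ = 2^k := by push_cast; ring
    have h2 : (2:ℝ)^k = 2 * 2^(k-1) := by
      obtain ⟨m, rfl⟩ : ∃ m, k = m+1 := ⟨k-1, by omega⟩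
      rw [pow_succ, Nat.add_sub_cancel]; ring
    nlinarith
  refine ⟨main, ?_⟩
  apply Filter.liminf_le_of_frequently_le
  · rw [Filter.frequently_atTop]
    intro b
    obtain ⟨n, hn⟩ := pow_unbounded_of_one_lt b (by norm_num : (1:ℝ) < 2)
    set k := n + 2 with hk
    refine ⟨(3/2) * 2^(k-1), ?_, ?_⟩
    · have h1 : (2:ℝ)^n ≤ 2^(k-1) := pow_le_pow_right₀ (by norm_num) (by omega)
      have h2 : (2:ℝ)^(k-1) ≤ (3/2) * 2^(k-1) := by nlinarith [pow_pos (by norm_num : (0:ℝ) < 2) (k-1)]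
      linarith
    · exact main k (by omega) _ le_rfl (by
        have h2 : (2:ℝ)^k = 2 * 2^(k-1) := by
          simp only [hk, show n+2-1 = n+1 from rfl, pow_succ]; ring
        nlinarith [pow_pos (by norm_num : (0:ℝ) < 2) (k-1)])
  · refine ⟨0, ?_⟩
    rw [Filter.eventually_map]
    filter_upwards [Filter.eventually_ge_atTop (1:ℝ)] with r hr
    have : (0:ℝ) < r := by linarith
    positivity
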